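/- For every ε > 0 and every ε' with 0 < ε' ≤ (2/3)ε, every recurrently ε'-weakly temperable point is recurrently ε-weakly temperable, i.e. RWT_χ^{ε'} ⊆ RWT_χ^{ε}; similarly WT_χ^{ε'} ⊆ WT_χ^{ε}. -/
import Mathlib


/-- `Q_ε(x)`: the largest element of `{e^{-ℓε/3} : ℓ ∈ ℕ}` not exceeding
`(1/3^{6/β}) ε^{90/β} ‖C_χ^{-1}(x)‖^{-48/β}`; here `c` stands for
`‖C_χ^{-1}(x)‖`. -/
noncomputable def Qeps (β ε c : ℝ) : ℝ :=
  sSup {Q : ℝ | (∃ ℓ : ℕ, Q = Real.exp (-((ℓ : ℝ) * ε) / 3)) ∧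
    Q ≤ (1 / (3 : ℝ) ^ ((6 : ℝ) / β)) * ε ^ ((90 : ℝ) / β) * c ^ (-((48 : ℝ) / β))}

/-- `x` is `ε`-weakly temperable: there is a kernel `q` along the orbit of `x`
taking values in `{e^{-ℓε/3}}`, with `e^{-ε} ≤ q∘f/q ≤ e^{ε}` and
`q(f^n x) ≤ Q_ε(f^n x)` for all `n ∈ ℤ`. -/
def WeaklyTemperable {M : Type*} (f : Equiv.Perm M) (β : ℝ) (c : M → ℝ)
    (ε : ℝ) (x : M) : Prop :=
  ∃ q : ℤ → ℝ,
    (∀ n : ℤ, ∃ ℓ : ℕ, q n = Real.exp (-((ℓ : ℝ) * ε) / 3)) ∧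
    (∀ n : ℤ, Real.exp (-ε) ≤ q (n + 1) / q n ∧ q (n + 1) / q n ≤ Real.exp ε) ∧
    (∀ n : ℤ, q n ≤ Qeps β ε (c ((f ^ n) x)))

/-- `x` is recurrently `ε`-weakly temperable: the kernel `q` can moreover be
chosen with `limsup_{n→±∞} q(f^n x) > 0`. -/
def RecurrentlyWeaklyTemperable {M : Type*} (f : Equiv.Perm M) (β : ℝ)
    (c : M → ℝ) (ε : ℝ) (x : M) : Prop :=
  ∃ q : ℤ → ℝ,
    (∀ n : ℤ, ∃ ℓ : ℕ, q n = Real.exp (-((ℓ : ℝ) * ε) / 3)) ∧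
    (∀ n : ℤ, Real.exp (-ε) ≤ q (n + 1) / q n ∧ q (n + 1) / q n ≤ Real.exp ε) ∧
    (∀ n : ℤ, q n ≤ Qeps β ε (c ((f ^ n) x))) ∧
    (∃ c0 : ℝ, 0 < c0 ∧ (∀ N : ℕ, ∃ n : ℤ, (N : ℤ) ≤ n ∧ c0 ≤ q n) ∧
      (∀ N : ℕ, ∃ n : ℤ, n ≤ -(N : ℤ) ∧ c0 ≤ q n))

/-- For every `ε > 0` and every `ε'` with `0 < ε' ≤ (2/3)ε`,
every recurrently `ε'`-weakly temperable point is recurrently `ε`-weakly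
temperable, i.e. `RWT_χ^{ε'} ⊆ RWT_χ^{ε}`; similarly `WT_χ^{ε'} ⊆ WT_χ^{ε}`. -/

lemma Qeps_le_T (β ε c : ℝ) (hε : 0 < ε) (hc : 1 ≤ c) :
    Qeps β ε c ≤ (1 / (3 : ℝ) ^ ((6 : ℝ) / β)) * ε ^ ((90 : ℝ) / β) * c ^ (-((48 : ℝ) / β)) := by
  apply Real.sSup_le (fun y hy => hy.2)
  have hc0 : (0:ℝ) < c := lt_of_lt_of_le one_pos hc
  positivity

lemma T_mono (β ε ε' c : ℝ) (hβ : 0 < β) (hε'0 : 0 < ε') (hε' : ε' ≤ ε) (hc : 1 ≤ c) :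
    (1 / (3 : ℝ) ^ ((6 : ℝ) / β)) * ε' ^ ((90 : ℝ) / β) * c ^ (-((48 : ℝ) / β)) ≤
    (1 / (3 : ℝ) ^ ((6 : ℝ) / β)) * ε ^ ((90 : ℝ) / β) * c ^ (-((48 : ℝ) / β)) := by
  have hc0 : (0:ℝ) < c := lt_of_lt_of_le one_pos hc
  have h1 : ε' ^ ((90 : ℝ) / β) ≤ ε ^ ((90 : ℝ) / β) :=
    Real.rpow_le_rpow hε'0.le hε' (by positivity)
  have h2 : (0:ℝ) ≤ 1 / (3 : ℝ) ^ ((6 : ℝ) / β) := by positivity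
  have h3 : (0:ℝ) ≤ c ^ (-((48 : ℝ) / β)) := by positivity
  calc (1 / (3 : ℝ) ^ ((6 : ℝ) / β)) * ε' ^ ((90 : ℝ) / β) * c ^ (-((48 : ℝ) / β))
      ≤ (1 / (3 : ℝ) ^ ((6 : ℝ) / β)) * ε ^ ((90 : ℝ) / β) * c ^ (-((48 : ℝ) / β)) := by
        apply mul_le_mul_of_nonneg_right _ h3
        exact mul_le_mul_of_nonneg_left h1 h2

lemma kernel_convert (β : ℝ) (hβ : 0 < β) (cs : ℤ → ℝ) (hc : ∀ n, 1 ≤ cs n)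
    (ε ε' : ℝ) (hε : 0 < ε) (hε'0 : 0 < ε') (hε' : ε' ≤ (2 / 3) * ε)
    (q' : ℤ → ℝ)
    (h1 : ∀ n : ℤ, ∃ ℓ : ℕ, q' n = Real.exp (-((ℓ : ℝ) * ε') / 3))
    (h2 : ∀ n : ℤ, Real.exp (-ε') ≤ q' (n + 1) / q' n ∧ q' (n + 1) / q' n ≤ Real.exp ε')
    (h3 : ∀ n : ℤ, q' n ≤ Qeps β ε' (cs n)) :
    ∃ q : ℤ → ℝ,
      (∀ n : ℤ, ∃ ℓ : ℕ, q n = Real.exp (-((ℓ : ℝ) * ε) / 3)) ∧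
      (∀ n : ℤ, Real.exp (-ε) ≤ q (n + 1) / q n ∧ q (n + 1) / q n ≤ Real.exp ε) ∧
      (∀ n : ℤ, q n ≤ Qeps β ε (cs n)) ∧
      (∀ n : ℤ, Real.exp (-ε / 3) * q' n ≤ q n) := by
  classical
  -- choose the exponents of q'
  set g : ℤ → ℕ := fun n => (h1 n).choose with hg
  have hgval : ∀ n, q' n = Real.exp (-((g n : ℝ) * ε') / 3) := fun n => (h1 n).choose_spec
  set L : ℤ → ℕ := fun n => ⌈(g n : ℝ) * ε' / ε⌉₊ with hL
  set q : ℤ → ℝ := fun n => Real.exp (-((L n : ℝ) * ε) / 3) with hq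
  have ha0 : ∀ n, (0:ℝ) ≤ (g n : ℝ) * ε' / ε := fun n => by positivity
  have hLlb : ∀ n, (g n : ℝ) * ε' / ε ≤ (L n : ℝ) := fun n => Nat.le_ceil _
  have hLub : ∀ n, (L n : ℝ) < (g n : ℝ) * ε' / ε + 1 :=
    fun n => Nat.ceil_lt_add_one (ha0 n)
  -- q ≤ q'
  have hqle : ∀ n, q n ≤ q' n := by
    intro n
    rw [hgval n]
    apply Real.exp_le_exp.mpr
    have := hLlb n
    rw [div_le_iff₀ hε] at this
    nlinarith
  -- lower bound
  have hqge : ∀ n, Real.exp (-ε / 3) * q' n ≤ q n := by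
    intro n
    rw [hgval n, ← Real.exp_add]
    apply Real.exp_le_exp.mpr
    have h := hLub n
    rw [show (g n:ℝ) * ε' / ε + 1 = ((g n:ℝ) * ε' + ε) / ε by field_simp] at h
    have hm : (L n : ℝ) * ε < (g n : ℝ) * ε' + ε := (lt_div_iff₀ hε).mp h
    nlinarith
  -- difference of g exponents is at most 3
  have hd' : ∀ n : ℤ, |(g n : ℝ) - (g (n + 1) : ℝ)| ≤ 3 := by
    intro n
    have hqpos : q' n ≠ 0 := by rw [hgval n]; exact (Real.exp_pos _).ne'
    have hratio : q' (n + 1) / q' n =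
        Real.exp ((-((g (n+1) : ℝ) * ε') / 3) - (-((g n : ℝ) * ε') / 3)) := by
      rw [hgval n, hgval (n+1), Real.exp_sub]
    obtain ⟨hlo, hhi⟩ := h2 n
    rw [hratio, Real.exp_le_exp] at hlo hhi
    rw [abs_le]
    constructor <;> nlinarith
  refine ⟨q, fun n => ⟨L n, rfl⟩, ?_, ?_, hqge⟩
  · intro n
    have hratio : q (n + 1) / q n =
        Real.exp ((-((L (n+1) : ℝ) * ε) / 3) - (-((L n : ℝ) * ε) / 3)) := by
      rw [hq]; rw [Real.exp_sub]
    rw [hratio]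
    have hd := hd' n
    rw [abs_le] at hd
    have hub1 := hLub n
    have hub2 := hLub (n + 1)
    have hlb1 := hLlb n
    have hlb2 := hLlb (n + 1)
    have hεne : ε ≠ 0 := hε.ne'
    have e1 : (g n : ℝ) * ε' / ε - (g (n+1) : ℝ) * ε' / ε ≤ 2 := by
      rw [div_sub_div_same, div_le_iff₀ hε]
      nlinarith
    have e2 : (g (n+1) : ℝ) * ε' / ε - (g n : ℝ) * ε' / ε ≤ 2 := by
      rw [div_sub_div_same, div_le_iff₀ hε]
      nlinarith
    constructor <;> rw [Real.exp_le_exp] <;> nlinarith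
  · intro n
    have hT' : q' n ≤ (1 / (3 : ℝ) ^ ((6 : ℝ) / β)) * ε' ^ ((90 : ℝ) / β) *
        (cs n) ^ (-((48 : ℝ) / β)) :=
      (h3 n).trans (Qeps_le_T β ε' (cs n) hε'0 (hc n))
    have hεε' : ε' ≤ ε := hε'.trans (by linarith)
    have hT : q n ≤ (1 / (3 : ℝ) ^ ((6 : ℝ) / β)) * ε ^ ((90 : ℝ) / β) *
        (cs n) ^ (-((48 : ℝ) / β)) :=
      ((hqle n).trans hT').trans (T_mono β ε ε' (cs n) hβ hε'0 hεε' (hc n))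
    apply le_csSup
    · exact ⟨_, fun y hy => hy.2⟩
    · exact ⟨⟨L n, rfl⟩, hT⟩

theorem RWT_and_WT_monotone_in_epsilon
    {M : Type*} (f : Equiv.Perm M) (β : ℝ) (hβ : 0 < β)
    (c : M → ℝ) (hc : ∀ x, 1 ≤ c x)
    (ε ε' : ℝ) (hε : 0 < ε) (hε'0 : 0 < ε') (hε' : ε' ≤ (2 / 3) * ε) :
    (∀ x : M, RecurrentlyWeaklyTemperable f β c ε' x →
        RecurrentlyWeaklyTemperable f β c ε x) ∧
    (∀ x : M, WeaklyTemperable f β c ε' x → WeaklyTemperable f β c ε x) := by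
  constructor
  · rintro x ⟨q', h1, h2, h3, c0, hc0, hplus, hminus⟩
    obtain ⟨q, hq1, hq2, hq3, hq4⟩ :=
      kernel_convert β hβ (fun n => c ((f ^ n) x)) (fun n => hc _)
        ε ε' hε hε'0 hε' q' h1 h2 h3
    refine ⟨q, hq1, hq2, hq3, Real.exp (-ε / 3) * c0, by positivity, ?_, ?_⟩
    · intro N
      obtain ⟨n, hn, hcn⟩ := hplus N
      exact ⟨n, hn, le_trans (by nlinarith [Real.exp_pos (-ε / 3)]) (hq4 n)⟩
    · intro N
      obtain ⟨n, hn, hcn⟩ := hminus N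
      exact ⟨n, hn, le_trans (by nlinarith [Real.exp_pos (-ε / 3)]) (hq4 n)⟩
  · rintro x ⟨q', h1, h2, h3⟩
    obtain ⟨q, hq1, hq2, hq3, _⟩ :=
      kernel_convert β hβ (fun n => c ((f ^ n) x)) (fun n => hc _)
        ε ε' hε hε'0 hε' q' h1 h2 h3
    exact ⟨q, hq1, hq2, hq3⟩
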